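/- Let f ∈ L^∞([1,∞)). Then lim_{x→∞} (1/x)∫₁ˣ f(t)dt = α if and only if the multiplicative translates converge weak* to α: for every φ ∈ L¹([1,∞)), lim_{r→∞} ∫₁^∞ f(rx)φ(x)dx = α·∫₁^∞ φ(x)dx. -/

import Mathlib

open Filter MeasureTheory Set Topology

section Aux
variable {f : ℝ → ℝ} {C α : ℝ}

lemma aux_ii (hm : Measurable f) (hb : ∀ x ≥ (1 : ℝ), |f x| ≤ C)
    {u v : ℝ} (hu : 1 ≤ u) (hv : 1 ≤ v) : IntervalIntegrable f volume u v := by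
  rw [intervalIntegrable_iff]
  have : IntegrableOn (fun _ : ℝ => C) (uIoc u v) := integrableOn_const measure_Ioc_lt_top.ne
  refine Integrable.mono' this hm.aestronglyMeasurable ?_
  refine (ae_restrict_iff' measurableSet_uIoc).2 (Eventually.of_forall fun x hx => ?_)
  have h1 : (1:ℝ) ≤ x := le_trans (le_min hu hv) (le_of_lt hx.1)
  simpa using hb x h1

/-- computation: integral over `Ico a b` of `f (r*x)` in terms of `F`. -/
lemma aux_calc (hm : Measurable f) (hb : ∀ x ≥ (1 : ℝ), |f x| ≤ C)
    {a b : ℝ} (ha : 1 ≤ a) (hab : a ≤ b) {r : ℝ} (hr : 1 ≤ r) :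
    ∫ x in Ico a b, f (r * x) =
      b * ((∫ t in (1:ℝ)..(r*b), f t) / (r*b)) - a * ((∫ t in (1:ℝ)..(r*a), f t) / (r*a)) := by
  have hr0 : (0:ℝ) < r := lt_of_lt_of_le one_pos hr
  have ha0 : (0:ℝ) < a := lt_of_lt_of_le one_pos ha
  have hb0 : (0:ℝ) < b := lt_of_lt_of_le ha0 hab
  have hra : (1:ℝ) ≤ r * a := le_trans (by simpa using ha) (by nlinarith)
  have hrb : (1:ℝ) ≤ r * b := le_trans hra (by nlinarith)
  have h1 : ∫ x in Ico a b, f (r * x) = ∫ x in a..b, f (r * x) := by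
    rw [intervalIntegral.integral_of_le hab, MeasureTheory.integral_Ico_eq_integral_Ioo, ← MeasureTheory.integral_Ioc_eq_integral_Ioo]
  have h2 : (∫ x in a..b, f (r * x)) = r⁻¹ • ∫ x in r*a..r*b, f x :=
    intervalIntegral.integral_comp_mul_left f (ne_of_gt hr0)
  have h3 : (∫ x in (1:ℝ)..(r*b), f x) - (∫ x in (1:ℝ)..(r*a), f x) = ∫ x in r*a..r*b, f x :=
    intervalIntegral.integral_interval_sub_left (aux_ii hm hb le_rfl hrb)
      (aux_ii hm hb le_rfl hra)
  rw [h1, h2, ← h3]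
  field_simp
  linear_combination ((∫ x in (1:ℝ)..(r*b), f x) - (∫ x in (1:ℝ)..(r*a), f x)) * (mul_inv_cancel₀ hr0.ne')
end Aux

section Fwd
variable {f : ℝ → ℝ} {C α : ℝ}

/-- the weak-star convergence property for a test function `ψ`. -/
def Good (f : ℝ → ℝ) (α : ℝ) (ψ : ℝ → ℝ) : Prop :=
  Tendsto (fun r : ℝ => ∫ x in Ici (1:ℝ), f (r * x) * ψ x) atTop
    (𝓝 (α * ∫ x in Ici (1:ℝ), ψ x))

lemma aux_prod_int (hm : Measurable f) (hb : ∀ x ≥ (1 : ℝ), |f x| ≤ C)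
    {φ : ℝ → ℝ} (hφ : IntegrableOn φ (Ici (1:ℝ))) {r : ℝ} (hr : 1 ≤ r) :
    IntegrableOn (fun x => f (r * x) * φ x) (Ici (1:ℝ)) := by
  refine Integrable.mono' (hφ.norm.const_mul C) ?_ ?_
  · exact ((hm.comp (measurable_const_mul r)).aestronglyMeasurable.mul hφ.aestronglyMeasurable)
  · refine (ae_restrict_iff' measurableSet_Ici).2 (Eventually.of_forall fun x hx => ?_)
    have h1 : (1:ℝ) ≤ r * x := le_trans hx (le_mul_of_one_le_left (le_trans one_pos.le hx) hr)
    have := hb _ h1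
    simp only [norm_mul, Real.norm_eq_abs]
    exact mul_le_mul_of_nonneg_right this (abs_nonneg _) |>.trans_eq rfl

lemma fwd_interval (hm : Measurable f) (hb : ∀ x ≥ (1 : ℝ), |f x| ≤ C)
    (hα : Tendsto (fun x : ℝ => (∫ t in (1 : ℝ)..x, f t) / x) atTop (𝓝 α))
    {a b : ℝ} (ha : 1 ≤ a) (hab : a ≤ b) :
    Tendsto (fun r : ℝ => ∫ x in Ico a b, f (r * x)) atTop (𝓝 (α * (b - a))) := by
  have ha0 : (0:ℝ) < a := lt_of_lt_of_le one_pos ha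
  have hb0 : (0:ℝ) < b := lt_of_lt_of_le ha0 hab
  have hB : Tendsto (fun r : ℝ => b * ((∫ t in (1:ℝ)..(r*b), f t) / (r*b))) atTop (𝓝 (b * α)) :=
    (hα.comp (tendsto_id.atTop_mul_const hb0)).const_mul b
  have hA : Tendsto (fun r : ℝ => a * ((∫ t in (1:ℝ)..(r*a), f t) / (r*a))) atTop (𝓝 (a * α)) :=
    (hα.comp (tendsto_id.atTop_mul_const ha0)).const_mul a
  have := hB.sub hA
  have heq : ∀ᶠ r : ℝ in atTop,
      b * ((∫ t in (1:ℝ)..(r*b), f t) / (r*b)) - a * ((∫ t in (1:ℝ)..(r*a), f t) / (r*a))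
        = ∫ x in Ico a b, f (r * x) := by
    filter_upwards [eventually_ge_atTop (1:ℝ)] with r hr
    exact (aux_calc hm hb ha hab hr).symm
  have h2 := this.congr' heq
  convert h2 using 2
  ring

lemma good_indicator (hm : Measurable f) (hb : ∀ x ≥ (1 : ℝ), |f x| ≤ C)
    (hα : Tendsto (fun x : ℝ => (∫ t in (1 : ℝ)..x, f t) / x) atTop (𝓝 α))
    {a b c : ℝ} (ha : 1 ≤ a) (hab : a ≤ b) :
    Good f α ((Ico a b).indicator fun _ => c) := by
  unfold Good
  have hsub : Ico a b ∩ Ici (1:ℝ) = Ico a b := by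
    refine inter_eq_left.2 fun x hx => le_trans ha hx.1
  have key : ∀ r : ℝ, (∫ x in Ici (1:ℝ), f (r * x) * (Ico a b).indicator (fun _ => c) x)
      = c * ∫ x in Ico a b, f (r * x) := by
    intro r
    have : (fun x => f (r * x) * (Ico a b).indicator (fun _ => c) x)
        = (Ico a b).indicator (fun x => f (r * x) * c) := by
      ext x
      by_cases hx : x ∈ Ico a b <;> simp [indicator_of_mem, indicator_of_notMem, hx]
    rw [this, integral_indicator measurableSet_Ico, Measure.restrict_restrict measurableSet_Ico,
      hsub]
    rw [MeasureTheory.integral_mul_const]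
    ring
  have kval : (∫ x in Ici (1:ℝ), (Ico a b).indicator (fun _ => c) x) = c * (b - a) := by
    rw [integral_indicator measurableSet_Ico, Measure.restrict_restrict measurableSet_Ico, hsub]
    simp [Real.volume_Ico, ENNReal.toReal_ofReal (sub_nonneg.2 hab), mul_comm, hab]
  simp only [key, kval]
  have := (fwd_interval hm hb hα ha hab).const_mul c
  convert this using 2
  ring
end Fwd

section Closure
variable {f : ℝ → ℝ} {C α : ℝ}

lemma good_sum (hm : Measurable f) (hb : ∀ x ≥ (1 : ℝ), |f x| ≤ C)
    {ι : Type*} (s : Finset ι) (ψ : ι → ℝ → ℝ)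
    (hint : ∀ i ∈ s, IntegrableOn (ψ i) (Ici (1:ℝ)))
    (hgood : ∀ i ∈ s, Good f α (ψ i)) :
    Good f α (fun x => ∑ i ∈ s, ψ i x) := by
  unfold Good
  have hlim : Tendsto (fun r : ℝ => ∑ i ∈ s, ∫ x in Ici (1:ℝ), f (r * x) * ψ i x) atTop
      (𝓝 (∑ i ∈ s, α * ∫ x in Ici (1:ℝ), ψ i x)) :=
    tendsto_finset_sum _ fun i hi => hgood i hi
  have heq : ∀ᶠ r : ℝ in atTop,
      (∑ i ∈ s, ∫ x in Ici (1:ℝ), f (r * x) * ψ i x)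
        = ∫ x in Ici (1:ℝ), f (r * x) * ∑ i ∈ s, ψ i x := by
    filter_upwards [eventually_ge_atTop (1:ℝ)] with r hr
    rw [← MeasureTheory.integral_finset_sum]
    · congr 1; ext x; rw [Finset.mul_sum]
    · exact fun i hi => aux_prod_int hm hb (hint i hi) hr
  have h2 := hlim.congr' heq
  convert h2 using 2
  rw [MeasureTheory.integral_finset_sum _ (fun i hi => hint i hi), Finset.mul_sum]

lemma abs_int_le {φ : ℝ → ℝ} : |∫ x in Ici (1:ℝ), φ x| ≤ ∫ x in Ici (1:ℝ), |φ x| := by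
  have := MeasureTheory.norm_integral_le_integral_norm (μ := volume.restrict (Ici (1:ℝ))) φ
  simpa [Real.norm_eq_abs] using this

lemma good_closure (hm : Measurable f) (hb : ∀ x ≥ (1 : ℝ), |f x| ≤ C) (hC : 0 ≤ C)
    {φ : ℝ → ℝ} (hφ : IntegrableOn φ (Ici (1:ℝ)))
    (happrox : ∀ ε > (0:ℝ), ∃ ψ : ℝ → ℝ, IntegrableOn ψ (Ici (1:ℝ)) ∧ Good f α ψ ∧
      (∫ x in Ici (1:ℝ), |φ x - ψ x|) ≤ ε) :
    Good f α φ := by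
  rw [Good, Metric.tendsto_nhds]
  intro ε hε
  set δ : ℝ := ε / (2 * (C + |α| + 1)) with hδdef
  have hden : (0:ℝ) < C + |α| + 1 := by positivity
  have hδ : 0 < δ := by positivity
  obtain ⟨ψ, hψint, hψgood, hψclose⟩ := happrox δ hδ
  have hψlim := Metric.tendsto_nhds.1 hψgood (ε/2) (by positivity)
  filter_upwards [hψlim, eventually_ge_atTop (1:ℝ)] with r hr1 hr2
  have hint1 := aux_prod_int hm hb hφ hr2
  have hint2 := aux_prod_int hm hb hψint hr2
  have hsubint : IntegrableOn (fun x => |φ x - ψ x|) (Ici (1:ℝ)) := (hφ.sub hψint).norm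
  set A := ∫ x in Ici (1:ℝ), f (r * x) * φ x
  set B := ∫ x in Ici (1:ℝ), f (r * x) * ψ x
  set Cc := α * ∫ x in Ici (1:ℝ), ψ x
  set D := α * ∫ x in Ici (1:ℝ), φ x
  have e1 : |A - B| ≤ C * δ := by
    have hAB : A - B = ∫ x in Ici (1:ℝ), (f (r * x) * φ x - f (r * x) * ψ x) :=
      (MeasureTheory.integral_sub hint1 hint2).symm
    rw [hAB]
    refine (abs_int_le).trans ?_
    have hmono : (∫ x in Ici (1:ℝ), |f (r * x) * φ x - f (r * x) * ψ x|)
        ≤ ∫ x in Ici (1:ℝ), C * |φ x - ψ x| := by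
      refine MeasureTheory.integral_mono_of_nonneg (Eventually.of_forall fun x => abs_nonneg _)
        (hsubint.const_mul C) ?_
      refine (ae_restrict_iff' measurableSet_Ici).2 (Eventually.of_forall fun x hx => ?_)
      have h1 : (1:ℝ) ≤ r * x := le_trans hx (le_mul_of_one_le_left (le_trans one_pos.le hx) hr2)
      show |f (r * x) * φ x - f (r * x) * ψ x| ≤ C * |φ x - ψ x|
      rw [← mul_sub, abs_mul]
      exact mul_le_mul_of_nonneg_right (hb _ h1) (abs_nonneg _)
    refine hmono.trans ?_
    rw [MeasureTheory.integral_const_mul]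
    exact mul_le_mul_of_nonneg_left hψclose hC
  have e2 : |Cc - D| ≤ |α| * δ := by
    have : Cc - D = α * ∫ x in Ici (1:ℝ), (ψ x - φ x) := by
      rw [MeasureTheory.integral_sub hψint hφ]; ring
    rw [this, abs_mul]
    refine mul_le_mul_of_nonneg_left ?_ (abs_nonneg _)
    refine (abs_int_le).trans ?_
    have : (∫ x in Ici (1:ℝ), |ψ x - φ x|) = ∫ x in Ici (1:ℝ), |φ x - ψ x| := by
      congr 1; ext x; exact abs_sub_comm _ _
    rw [this]; exact hψclose
  have e3 : |B - Cc| < ε/2 := by rw [← Real.dist_eq]; exact hr1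
  have hδb : (C + |α| + 1) * δ = ε / 2 := by
    rw [hδdef]; field_simp
  have t1 : |A - D| ≤ |A - B| + |B - D| := abs_sub_le A B D
  have t2 : |B - D| ≤ |B - Cc| + |Cc - D| := abs_sub_le B Cc D
  rw [Real.dist_eq]
  have hδnn : 0 ≤ δ := hδ.le
  nlinarith [abs_nonneg (A - B), abs_nonneg (Cc - D)]
end Closure

section Step
variable {f : ℝ → ℝ} {C α : ℝ}

lemma ind_int (a b c : ℝ) : IntegrableOn ((Ico a b).indicator fun _ => c) (Ici (1:ℝ)) := by
  rw [IntegrableOn, integrable_indicator_iff measurableSet_Ico]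
  refine integrableOn_const ?_
  exact (lt_of_le_of_lt (Measure.restrict_apply_le _ _) measure_Ico_lt_top).ne

lemma step_approx (hm : Measurable f) (hb : ∀ x ≥ (1 : ℝ), |f x| ≤ C)
    (hα : Tendsto (fun x : ℝ => (∫ t in (1 : ℝ)..x, f t) / x) atTop (𝓝 α))
    (g : ℝ → ℝ) (hg : Continuous g) (hgs : HasCompactSupport g) {ε : ℝ} (hε : 0 < ε) :
    ∃ ψ : ℝ → ℝ, IntegrableOn ψ (Ici (1:ℝ)) ∧ Good f α ψ ∧
      (∫ x in Ici (1:ℝ), |g x - ψ x|) ≤ ε := by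
  obtain ⟨b, hbsupp⟩ : ∃ b : ℝ, tsupport g ⊆ Icc (-b) b := by
    obtain ⟨b, hball⟩ := hgs.isCompact.isBounded.subset_closedBall 0
    exact ⟨b, by simpa [Real.closedBall_eq_Icc] using hball⟩
  set b₀ : ℝ := max b 1 + 1 with hb₀def
  have hb₀2 : (2:ℝ) ≤ b₀ := by
    have : (1:ℝ) ≤ max b 1 := le_max_right b 1
    rw [hb₀def]; linarith
  have hb₀b : b < b₀ := lt_of_le_of_lt (le_max_left b 1) (lt_add_one _)
  have hb₀1 : (0:ℝ) < b₀ - 1 := by linarith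
  set ε' : ℝ := ε / (b₀ - 1) with hε'def
  have hε' : 0 < ε' := div_pos hε hb₀1
  obtain ⟨δ, hδ, hδuc⟩ := Metric.uniformContinuous_iff.1
    (hgs.uniformContinuous_of_continuous hg) ε' hε'
  obtain ⟨n, hn⟩ := exists_nat_gt ((b₀ - 1) / δ)
  have hn0 : 0 < n := by
    by_contra h
    push_neg at h
    interval_cases n
    simp at hn
    nlinarith [div_pos hb₀1 hδ]
  have hnR : (0:ℝ) < n := Nat.cast_pos.2 hn0
  set Δ : ℝ := (b₀ - 1) / n with hΔdef
  have hΔpos : 0 < Δ := div_pos hb₀1 hnR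
  have hΔδ : Δ < δ := by
    rw [hΔdef, div_lt_iff₀ hnR]
    calc b₀ - 1 = ((b₀ - 1)/δ) * δ := by field_simp
      _ < n * δ := mul_lt_mul_of_pos_right hn hδ
      _ = δ * n := mul_comm _ _
  have hnΔ : (n:ℝ) * Δ = b₀ - 1 := by
    rw [hΔdef, mul_div_cancel₀ _ (ne_of_gt hnR)]
  set ψ : ℝ → ℝ := fun x =>
    ∑ i ∈ Finset.range n, (Ico (1+(i:ℝ)*Δ) (1+((i:ℝ)+1)*Δ)).indicator (fun _ => g (1+(i:ℝ)*Δ)) x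
    with hψdef
  have hcell1 : ∀ i : ℕ, (1:ℝ) ≤ 1 + (i:ℝ)*Δ := fun i =>
    le_add_of_nonneg_right (mul_nonneg (Nat.cast_nonneg i) hΔpos.le)
  have hcell2 : ∀ i : ℕ, (1:ℝ) + (i:ℝ)*Δ ≤ 1 + ((i:ℝ)+1)*Δ := fun i => by nlinarith
  have hψint : IntegrableOn ψ (Ici (1:ℝ)) := by
    apply MeasureTheory.integrable_finset_sum
    intro i _
    exact ind_int _ _ _
  have hψgood : Good f α ψ := by
    apply good_sum hm hb
    · exact fun i _ => ind_int _ _ _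
    · exact fun i _ => good_indicator hm hb hα (hcell1 i) (hcell2 i)
  refine ⟨ψ, hψint, hψgood, ?_⟩
  -- pointwise bound on Ici 1
  have hpt : ∀ x ∈ Ici (1:ℝ), |g x - ψ x| ≤ (Ico (1:ℝ) b₀).indicator (fun _ => ε') x := by
    intro x hx
    rcases lt_or_ge x b₀ with hxb | hxb
    · -- x ∈ [1, b₀)
      have hxmem : x ∈ Ico (1:ℝ) b₀ := mem_Ico.mpr ⟨hx, hxb⟩
      rw [indicator_of_mem hxmem]
      set i : ℕ := ⌊(x - 1)/Δ⌋₊ with hidef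
      have hxnn : 0 ≤ (x - 1)/Δ := div_nonneg (by linarith [mem_Ici.1 hx]) hΔpos.le
      have hin : i < n := by
        rw [hidef, Nat.floor_lt hxnn]
        rw [div_lt_iff₀ hΔpos]
        rw [mul_comm]
        linarith [hnΔ]
      have hlow : 1 + (i:ℝ)*Δ ≤ x := by
        have := Nat.floor_le hxnn
        rw [← hidef] at this
        have := (le_div_iff₀ hΔpos).1 this
        linarith
      have hhigh : x < 1 + ((i:ℝ)+1)*Δ := by
        have := Nat.lt_floor_add_one ((x-1)/Δ)
        rw [← hidef] at this
        have := (div_lt_iff₀ hΔpos).1 this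
        nlinarith
      have hψx : ψ x = g (1 + (i:ℝ)*Δ) := by
        rw [hψdef]
        have hmemi : x ∈ Ico (1+(i:ℝ)*Δ) (1+((i:ℝ)+1)*Δ) := mem_Ico.mpr ⟨hlow, hhigh⟩
        refine Finset.sum_eq_single_of_mem i (Finset.mem_range.2 hin) ?_ |>.trans
          (indicator_of_mem hmemi _)
        intro j hj hne
        refine indicator_of_notMem ?_ _
        rcases lt_or_gt_of_ne hne with hji | hji
        · -- j < i : x ≥ 1 + iΔ ≥ 1 + (j+1)Δ
          intro hmem
          have hj1i : ((j:ℝ)+1) ≤ (i:ℝ) := by exact_mod_cast Nat.succ_le_of_lt hji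
          have : x < 1 + ((j:ℝ)+1)*Δ := hmem.2
          nlinarith
        · intro hmem
          have hij : ((i:ℝ)+1) ≤ (j:ℝ) := by exact_mod_cast Nat.succ_le_of_lt hji
          have : 1 + (j:ℝ)*Δ ≤ x := hmem.1
          nlinarith
      rw [hψx]
      have hdist : dist x (1 + (i:ℝ)*Δ) < δ := by
        rw [Real.dist_eq, abs_of_nonneg (by linarith)]
        nlinarith
      exact (le_of_lt (by simpa [Real.dist_eq] using hδuc hdist))
    · -- x ≥ b₀ : both vanish
      have hg0 : g x = 0 := by
        apply image_eq_zero_of_notMem_tsupport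
        intro hmem
        have := (hbsupp hmem).2
        linarith
      have hψ0 : ψ x = 0 := by
        rw [hψdef]
        refine Finset.sum_eq_zero fun i hi => ?_
        refine indicator_of_notMem ?_ _
        intro hmem
        have h1 : x < 1 + ((i:ℝ)+1)*Δ := hmem.2
        have h2 : ((i:ℝ)+1) ≤ (n:ℝ) := by exact_mod_cast Nat.succ_le_of_lt (Finset.mem_range.1 hi)
        nlinarith
      rw [hg0, hψ0, indicator_of_notMem (by intro hmem; linarith [hmem.2])]
      simp
  -- integrate the bound
  have hgint : IntegrableOn g (Ici (1:ℝ)) := (hg.integrable_of_hasCompactSupport hgs).integrableOn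
  have hRHSint : IntegrableOn ((Ico (1:ℝ) b₀).indicator fun _ => ε') (Ici (1:ℝ)) := ind_int _ _ _
  have hmono : (∫ x in Ici (1:ℝ), |g x - ψ x|)
      ≤ ∫ x in Ici (1:ℝ), (Ico (1:ℝ) b₀).indicator (fun _ => ε') x := by
    refine MeasureTheory.integral_mono_of_nonneg (Eventually.of_forall fun x => abs_nonneg _)
      hRHSint ?_
    exact (ae_restrict_iff' measurableSet_Ici).2 (Eventually.of_forall hpt)
  refine hmono.trans ?_
  have hIb : Ico (1:ℝ) b₀ ∩ Ici (1:ℝ) = Ico 1 b₀ := inter_eq_left.2 fun x hx => hx.1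
  rw [integral_indicator measurableSet_Ico, Measure.restrict_restrict measurableSet_Ico, hIb,
    setIntegral_const, Real.volume_real_Ico_of_le (by linarith), smul_eq_mul, hε'def]
  refine le_of_eq ?_
  field_simp
end Step

section Main
variable {f : ℝ → ℝ} {C α : ℝ}

lemma fwd_main (hm : Measurable f) (hb : ∀ x ≥ (1 : ℝ), |f x| ≤ C)
    (hα : Tendsto (fun x : ℝ => (∫ t in (1 : ℝ)..x, f t) / x) atTop (𝓝 α))
    {φ : ℝ → ℝ} (hφ : IntegrableOn φ (Ici (1:ℝ))) : Good f α φ := by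
  have hC : 0 ≤ C := le_trans (abs_nonneg _) (hb 1 le_rfl)
  refine good_closure hm hb hC hφ fun ε hε => ?_
  set φs : ℝ → ℝ := (Ici (1:ℝ)).indicator φ with hφsdef
  have hφs : Integrable φs volume := (integrable_indicator_iff measurableSet_Ici).2 hφ
  obtain ⟨g, hgs, hgclose, hgc, hgint⟩ :=
    hφs.exists_hasCompactSupport_integral_sub_le (half_pos hε)
  obtain ⟨ψ, hψint, hψgood, hψclose⟩ := step_approx hm hb hα g hgc hgs (half_pos hε)
  refine ⟨ψ, hψint, hψgood, ?_⟩
  have hint1 : IntegrableOn (fun x => |φ x - g x|) (Ici (1:ℝ)) :=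
    (hφ.sub hgint.integrableOn).norm
  have hint2 : IntegrableOn (fun x => |g x - ψ x|) (Ici (1:ℝ)) :=
    (hgint.integrableOn.sub hψint).norm
  have htri : (∫ x in Ici (1:ℝ), |φ x - ψ x|)
      ≤ (∫ x in Ici (1:ℝ), |φ x - g x|) + ∫ x in Ici (1:ℝ), |g x - ψ x| := by
    rw [← MeasureTheory.integral_add hint1 hint2]
    refine MeasureTheory.integral_mono_of_nonneg (Eventually.of_forall fun x => abs_nonneg _)
      (hint1.add hint2) (Eventually.of_forall fun x => ?_)
    exact abs_sub_le (φ x) (g x) (ψ x)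
  have h1 : (∫ x in Ici (1:ℝ), |φ x - g x|) ≤ ε/2 := by
    have heq : (∫ x in Ici (1:ℝ), |φ x - g x|) = ∫ x in Ici (1:ℝ), ‖φs x - g x‖ := by
      refine setIntegral_congr_fun measurableSet_Ici fun x hx => ?_
      rw [hφsdef, indicator_of_mem hx, Real.norm_eq_abs]
    rw [heq]
    refine le_trans (setIntegral_le_integral (hφs.sub hgint).norm
      (Eventually.of_forall fun x => norm_nonneg _)) hgclose
  linarith [hψclose]

lemma rev_main (hm : Measurable f) (hb : ∀ x ≥ (1 : ℝ), |f x| ≤ C)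
    (h : Tendsto (fun r : ℝ => ∫ x in Ici (1:ℝ),
        f (r * x) * (Ico (1:ℝ) 2).indicator (fun _ => (1:ℝ)) x) atTop
      (𝓝 (α * ∫ x in Ici (1:ℝ), (Ico (1:ℝ) 2).indicator (fun _ => (1:ℝ)) x))) :
    Tendsto (fun x : ℝ => (∫ t in (1 : ℝ)..x, f t) / x) atTop (𝓝 α) := by
  have hC : 0 ≤ C := le_trans (abs_nonneg _) (hb 1 le_rfl)
  set F : ℝ → ℝ := fun x => ∫ t in (1:ℝ)..x, f t with hFdef
  -- value of the indicator integral
  have hval : (∫ x in Ici (1:ℝ), (Ico (1:ℝ) 2).indicator (fun _ => (1:ℝ)) x) = 1 := by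
    have hsub : Ico (1:ℝ) 2 ∩ Ici (1:ℝ) = Ico (1:ℝ) 2 := inter_eq_left.2 fun x hx => hx.1
    rw [integral_indicator measurableSet_Ico, Measure.restrict_restrict measurableSet_Ico, hsub]
    simp [Real.volume_Ico]
    norm_num
  -- the limit statement for E r = F(2r)/r - F(r)/r
  have he : Tendsto (fun r : ℝ => F (2*r) / r - F r / r) atTop (𝓝 α) := by
    rw [hval, mul_one] at h
    refine h.congr' ?_
    filter_upwards [eventually_ge_atTop (1:ℝ)] with r hr
    have hr0 : (0:ℝ) < r := lt_of_lt_of_le one_pos hr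
    have hkey : (∫ x in Ici (1:ℝ), f (r * x) * (Ico (1:ℝ) 2).indicator (fun _ => (1:ℝ)) x)
        = ∫ x in Ico (1:ℝ) 2, f (r * x) := by
      have hsub : Ico (1:ℝ) 2 ∩ Ici (1:ℝ) = Ico (1:ℝ) 2 := inter_eq_left.2 fun x hx => hx.1
      have : (fun x => f (r * x) * (Ico (1:ℝ) 2).indicator (fun _ => (1:ℝ)) x)
          = (Ico (1:ℝ) 2).indicator (fun x => f (r * x)) := by
        ext x
        by_cases hx : x ∈ Ico (1:ℝ) 2 <;> simp [indicator_of_mem, indicator_of_notMem, hx]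
      rw [this, integral_indicator measurableSet_Ico,
        Measure.restrict_restrict measurableSet_Ico, hsub]
    rw [hkey, aux_calc hm hb le_rfl one_le_two hr]
    rw [hFdef]
    have h2r : r * 2 = 2 * r := mul_comm r 2
    rw [h2r]
    field_simp
  -- boundedness of u r = F r / r  - α
  have hFb : ∀ r ≥ (1:ℝ), |F r| ≤ C * (r - 1) := by
    intro r hr
    have := intervalIntegral.norm_integral_le_of_norm_le_const
      (a := 1) (b := r) (C := C) (f := f) ?_
    · simpa [hFdef, Real.norm_eq_abs, abs_of_nonneg (sub_nonneg.2 hr)] using this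
    · intro x hx
      rw [uIoc_of_le hr] at hx
      exact hb x hx.1.le
  have hub : ∀ r ≥ (1:ℝ), |F r / r - α| ≤ C + |α| := by
    intro r hr
    have hr0 : (0:ℝ) < r := lt_of_lt_of_le one_pos hr
    have h1 : |F r / r| ≤ C := by
      rw [abs_div, abs_of_pos hr0, div_le_iff₀ hr0]
      refine le_trans (hFb r hr) ?_
      nlinarith
    calc |F r / r - α| ≤ |F r / r| + |α| := abs_sub _ _
      _ ≤ C + |α| := add_le_add h1 le_rfl
  set B : ℝ := C + |α| with hBdef
  have hBnn : 0 ≤ B := by positivity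
  -- inductive claim
  have claim : ∀ δ > (0:ℝ), ∀ n : ℕ, ∀ᶠ r : ℝ in atTop, |F r / r - α| ≤ B / 2^n + 2*δ := by
    intro δ hδ
    intro n
    induction n with
    | zero =>
      filter_upwards [eventually_ge_atTop (1:ℝ)] with r hr
      have := hub r hr
      simp only [pow_zero]
      linarith
    | succ n ih =>
      have heδ : ∀ᶠ r : ℝ in atTop, |F (2*r) / r - F r / r - α| ≤ δ := by
        have := Metric.tendsto_nhds.1 he δ hδ
        filter_upwards [this] with r hr
        rw [Real.dist_eq] at hr
        exact hr.le
      have hstep : ∀ᶠ r : ℝ in atTop, |F (2*r) / (2*r) - α| ≤ B / 2^(n+1) + 2*δ := by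
        filter_upwards [ih, heδ, eventually_ge_atTop (1:ℝ)] with r h1 h2 hr
        have hr0 : (0:ℝ) < r := lt_of_lt_of_le one_pos hr
        have hid : F (2*r) / (2*r) - α
            = (F r / r - α)/2 + (F (2*r) / r - F r / r - α)/2 := by
          field_simp
          ring
        rw [hid]
        have := abs_add_le ((F r / r - α)/2) ((F (2*r) / r - F r / r - α)/2)
        rw [abs_div, abs_div] at this
        simp only [abs_two] at this
        refine le_trans this ?_
        rw [pow_succ]
        have e1 : |F r / r - α| / 2 ≤ (B / 2^n + 2*δ)/2 := by linarith
        have e2 : |F (2*r) / r - F r / r - α| / 2 ≤ δ/2 := by linarith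
        calc |F r / r - α| / 2 + |F (2*r) / r - F r / r - α| / 2
            ≤ (B / 2^n + 2*δ)/2 + δ/2 := add_le_add e1 e2
          _ ≤ B / (2^n * 2) + 2*δ := by
              rw [← div_div]
              linarith
      have hdiv : Tendsto (fun s : ℝ => s / 2) atTop atTop :=
        tendsto_id.atTop_div_const two_pos
      filter_upwards [hdiv.eventually hstep] with s hs
      rwa [show 2*(s/2) = s by ring] at hs
  -- conclude
  rw [Metric.tendsto_nhds]
  intro ε hε
  have hpow : Tendsto (fun n : ℕ => B * (1/2:ℝ)^n) atTop (𝓝 0) := by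
    have := tendsto_pow_atTop_nhds_zero_of_lt_one (by norm_num : (0:ℝ) ≤ 1/2)
      (by norm_num : (1/2:ℝ) < 1)
    simpa using this.const_mul B
  obtain ⟨n, hn⟩ := (hpow.eventually_lt_const (show (0:ℝ) < ε/4 by positivity)).exists
  filter_upwards [claim (ε/4) (by positivity) n] with r hr
  rw [Real.dist_eq]
  have hBn : B / 2^n = B * (1/2)^n := by
    rw [div_pow, one_pow, div_eq_mul_inv, div_eq_mul_inv, one_mul]
  have : |F r / r - α| ≤ B * (1/2)^n + 2*(ε/4) := by rw [← hBn]; exact hr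
  calc |(∫ t in (1:ℝ)..r, f t) / r - α| = |F r / r - α| := by rw [hFdef]
    _ ≤ B * (1/2)^n + 2*(ε/4) := this
    _ < ε/4 + ε/2 := by linarith
    _ < ε := by linarith
end Main

/-- For `f ∈ L^∞([1,∞))`: `M(f) = α` iff the multiplicative translates
`f(r·)` converge weak* in `L^∞([1,∞))` to the constant `α`. -/
theorem cesaro_iff_weakStar_mul_translates (f : ℝ → ℝ) (C α : ℝ)
    (hm : Measurable f) (hb : ∀ x ≥ (1 : ℝ), |f x| ≤ C) :
    Tendsto (fun x : ℝ => (∫ t in (1 : ℝ)..x, f t) / x) atTop (𝓝 α) ↔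
    (∀ φ : ℝ → ℝ, IntegrableOn φ (Ici (1 : ℝ)) →
      Tendsto (fun r : ℝ => ∫ x in Ici (1 : ℝ), f (r * x) * φ x) atTop
        (𝓝 (α * ∫ x in Ici (1 : ℝ), φ x))) := by
  constructor
  · intro hα φ hφ
    exact fwd_main hm hb hα hφ
  · intro h
    exact rev_main hm hb (h _ (ind_int 1 2 1))
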